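/- Let q₀ = (1,1,0) ∈ ℍ and define f(p) = d_R(p, q₀) for p ∈ ℍ. Then |f(p) − f(p')| ≤ d_R(p, p') for all p, p' ∈ ℍ, but there is no constant L > 0 such that |f(p) − f(p')| ≤ L·d_L(p, p') for all p, p' ∈ ℍ. -/

import Mathlib

noncomputable section

/-- The Heisenberg group as a set: `ℝ³` with coordinates `(x, y, z)`. -/
abbrev Heis : Type := ℝ × ℝ × ℝ

/-- The Heisenberg group multiplication. -/
def Hmul (p q : Heis) : Heis :=
  (p.1 + q.1, p.2.1 + q.2.1, p.2.2 + q.2.2 + (p.1 * q.2.1 - q.1 * p.2.1) / 2)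

/-- The Heisenberg group inverse. -/
def Hinv (p : Heis) : Heis := (-p.1, -p.2.1, -p.2.2)

/-- The Korányi gauge `|p|_G = ((x² + y²)² + 16 z²)^(1/4)`. -/
def kGauge (p : Heis) : ℝ := ((p.1 ^ 2 + p.2.1 ^ 2) ^ 2 + 16 * p.2.2 ^ 2) ^ ((1 : ℝ) / 4)

/-- The left-invariant gauge metric `d_L(p,q) = |p⁻¹·q|_G`. -/
def dL (p q : Heis) : ℝ := kGauge (Hmul (Hinv p) q)

/-- The right-invariant gauge metric `d_R(p,q) = |p·q⁻¹|_G`. -/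
def dR (p q : Heis) : ℝ := kGauge (Hmul p (Hinv q))

/-- The base point `q₀ = (1,1,0)`. -/
def q₀ : Heis := (1, 1, 0)

/-- Auxiliary complex number attached to a Heisenberg point. -/
def kC (p : Heis) : ℂ := ⟨p.1 ^ 2 + p.2.1 ^ 2, 4 * p.2.2⟩

lemma kGauge_eq_sqrt_abs (p : Heis) :
    kGauge p = Real.sqrt (‖kC p‖) := by
  have hS : (0 : ℝ) ≤ (p.1 ^ 2 + p.2.1 ^ 2) ^ 2 + 16 * p.2.2 ^ 2 := by positivity
  rw [kGauge, kC, Complex.norm_def, Complex.normSq_mk, Real.sqrt_eq_rpow,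
    Real.sqrt_eq_rpow,
    show (p.1 ^ 2 + p.2.1 ^ 2) * (p.1 ^ 2 + p.2.1 ^ 2) + 4 * p.2.2 * (4 * p.2.2)
      = (p.1 ^ 2 + p.2.1 ^ 2) ^ 2 + 16 * p.2.2 ^ 2 by ring,
    ← Real.rpow_mul hS]
  norm_num

lemma kGauge_mul_le (p q : Heis) : kGauge (Hmul p q) ≤ kGauge p + kGauge q := by
  set A := kC p with hA
  set B := kC q with hB
  set C : ℂ := ⟨2 * (p.1 * q.1 + p.2.1 * q.2.1), 2 * (p.1 * q.2.1 - q.1 * p.2.1)⟩ with hC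
  have hsum : kC (Hmul p q) = A + B + C := by
    apply Complex.ext <;> simp [kC, Hmul, hA, hB, hC] <;> ring
  have habsC : ‖C‖ ≤
      2 * Real.sqrt (‖A‖) * Real.sqrt (‖B‖) := by
    have hCval : ‖C‖ =
        Real.sqrt (4 * ((p.1 ^ 2 + p.2.1 ^ 2) * (q.1 ^ 2 + q.2.1 ^ 2))) := by
      rw [Complex.norm_def, Complex.normSq_mk]; ring_nf
    have ha : p.1 ^ 2 + p.2.1 ^ 2 ≤ ‖A‖ := by
      have := Complex.abs_re_le_norm A
      have hre : A.re = p.1 ^ 2 + p.2.1 ^ 2 := rfl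
      rw [hre] at this
      exact (le_abs_self _).trans this
    have hb : q.1 ^ 2 + q.2.1 ^ 2 ≤ ‖B‖ := by
      have := Complex.abs_re_le_norm B
      have hre : B.re = q.1 ^ 2 + q.2.1 ^ 2 := rfl
      rw [hre] at this
      exact (le_abs_self _).trans this
    rw [hCval]
    have h4 : 4 * ((p.1 ^ 2 + p.2.1 ^ 2) * (q.1 ^ 2 + q.2.1 ^ 2)) ≤
        4 * (‖A‖ * ‖B‖) := by
      have hp0 : (0:ℝ) ≤ p.1 ^ 2 + p.2.1 ^ 2 := by positivity
      have hq0 : (0:ℝ) ≤ q.1 ^ 2 + q.2.1 ^ 2 := by positivity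
      nlinarith [ha, hb]
    calc Real.sqrt (4 * ((p.1 ^ 2 + p.2.1 ^ 2) * (q.1 ^ 2 + q.2.1 ^ 2)))
        ≤ Real.sqrt (4 * (‖A‖ * ‖B‖)) := Real.sqrt_le_sqrt h4
      _ = 2 * Real.sqrt (‖A‖) * Real.sqrt (‖B‖) := by
          rw [show (4 : ℝ) * (‖A‖ * ‖B‖) =
              (2:ℝ)^2 * (‖A‖ * ‖B‖) by norm_num,
            Real.sqrt_mul (by positivity), Real.sqrt_sq (by norm_num),
            Real.sqrt_mul (norm_nonneg A)]
          ring
  have htri : ‖kC (Hmul p q)‖ ≤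
      (Real.sqrt (‖A‖) + Real.sqrt (‖B‖)) ^ 2 := by
    rw [hsum]
    have h1 : ‖A + B + C‖ ≤ ‖A‖ + ‖B‖ + ‖C‖ :=
      (norm_add_le _ _).trans (by gcongr; exact norm_add_le _ _)
    have hA2 : Real.sqrt (‖A‖) ^ 2 = ‖A‖ :=
      Real.sq_sqrt (norm_nonneg A)
    have hB2 : Real.sqrt (‖B‖) ^ 2 = ‖B‖ :=
      Real.sq_sqrt (norm_nonneg B)
    nlinarith [habsC, h1]
  rw [kGauge_eq_sqrt_abs, kGauge_eq_sqrt_abs, kGauge_eq_sqrt_abs]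
  calc Real.sqrt (‖kC (Hmul p q)‖)
      ≤ Real.sqrt ((Real.sqrt (‖A‖) + Real.sqrt (‖B‖)) ^ 2) :=
        Real.sqrt_le_sqrt htri
    _ = Real.sqrt (‖A‖) + Real.sqrt (‖B‖) :=
        Real.sqrt_sq (by positivity)

lemma kGauge_Hinv (p : Heis) : kGauge (Hinv p) = kGauge p := by
  simp [kGauge, Hinv]

lemma dR_symm (p q : Heis) : dR p q = dR q p := by
  have h : Hmul q (Hinv p) = Hinv (Hmul p (Hinv q)) := by
    simp only [Hmul, Hinv, Prod.ext_iff]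
    refine ⟨by ring, by ring, by ring⟩
  rw [dR, dR, h, kGauge_Hinv]

lemma dR_triangle (p r q : Heis) : dR p q ≤ dR p r + dR r q := by
  have h : Hmul p (Hinv q) = Hmul (Hmul p (Hinv r)) (Hmul r (Hinv q)) := by
    simp only [Hmul, Hinv, Prod.ext_iff]
    refine ⟨by ring, by ring, by ring⟩
  rw [dR, h]
  exact kGauge_mul_le _ _

theorem dR_dist_lipschitz_dR_not_dL :
    (∀ p p' : Heis, |dR p q₀ - dR p' q₀| ≤ dR p p') ∧
    ¬ ∃ L : ℝ, 0 < L ∧ ∀ p p' : Heis, |dR p q₀ - dR p' q₀| ≤ L * dL p p' := by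
  constructor
  · intro p p'
    rw [abs_sub_le_iff]
    constructor
    · have := dR_triangle p p' q₀; linarith
    · have := dR_triangle p' p q₀
      rw [dR_symm p' p] at this; linarith
  · rintro ⟨L, hL, h⟩
    set a : ℝ := L⁻¹ ^ 2 with ha
    have ha0 : 0 < a := by positivity
    have key := h q₀ (1 + a, 1, -a / 2)
    -- compute dR q₀ q₀ = 0
    have h1 : dR q₀ q₀ = 0 := by
      have : Hmul q₀ (Hinv q₀) = ((0 : ℝ), (0 : ℝ), (0 : ℝ)) := by
        simp only [Hmul, Hinv, q₀, Prod.ext_iff]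
        norm_num
      rw [dR, this, kGauge]
      show (((0:ℝ) ^ 2 + (0:ℝ) ^ 2) ^ 2 + 16 * (0:ℝ) ^ 2) ^ ((1:ℝ)/4) = 0
      norm_num [Real.zero_rpow]
    -- compute dR p' q₀
    have h2 : dR (1 + a, 1, -a / 2) q₀ = (a ^ 4 + 16 * a ^ 2) ^ ((1:ℝ)/4) := by
      have : Hmul ((1 + a, 1, -a / 2) : Heis) (Hinv q₀) = ((a : ℝ), (0 : ℝ), -a) := by
        simp only [Hmul, Hinv, q₀, Prod.ext_iff]
        refine ⟨by ring, by ring, by ring⟩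
      rw [dR, this, kGauge]
      show ((a ^ 2 + (0:ℝ) ^ 2) ^ 2 + 16 * (-a) ^ 2) ^ ((1:ℝ)/4) = _
      congr 1
      ring
    -- compute dL q₀ p'
    have h3 : dL q₀ (1 + a, 1, -a / 2) = a := by
      have he : Hmul (Hinv q₀) ((1 + a, 1, -a / 2) : Heis) = ((a : ℝ), (0 : ℝ), (0 : ℝ)) := by
        simp only [Hmul, Hinv, q₀, Prod.ext_iff]
        refine ⟨by ring, by ring, by ring⟩
      rw [dL, he, kGauge]
      show ((a ^ 2 + (0:ℝ) ^ 2) ^ 2 + 16 * (0:ℝ) ^ 2) ^ ((1:ℝ)/4) = a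
      rw [show (a ^ 2 + (0:ℝ) ^ 2) ^ 2 + 16 * (0:ℝ) ^ 2 = a ^ 4 by ring,
        show ((1:ℝ)/4) = ((4:ℕ) : ℝ)⁻¹ by norm_num]
      exact Real.pow_rpow_inv_natCast ha0.le (by norm_num)
    rw [h1, h2, h3] at key
    -- lower bound the gauge term
    have hlow : 2 * Real.sqrt a ≤ (a ^ 4 + 16 * a ^ 2) ^ ((1:ℝ)/4) := by
      have heq : (2 * Real.sqrt a) = ((2 * Real.sqrt a) ^ 4) ^ ((1:ℝ)/4) := by
        rw [show ((1:ℝ)/4) = ((4:ℕ) : ℝ)⁻¹ by norm_num]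
        exact (Real.pow_rpow_inv_natCast (by positivity) (by norm_num)).symm
      rw [heq]
      apply Real.rpow_le_rpow (by positivity) _ (by norm_num)
      have hs : Real.sqrt a ^ 2 = a := Real.sq_sqrt ha0.le
      nlinarith [pow_pos ha0 4]
    have hsqrt : Real.sqrt a = L⁻¹ := by
      rw [ha, Real.sqrt_sq (by positivity)]
    rw [zero_sub, abs_neg,
      abs_of_nonneg (by positivity : (0:ℝ) ≤ (a ^ 4 + 16 * a ^ 2) ^ ((1:ℝ)/4))] at key
    have hkey : 2 * L⁻¹ ≤ L * a := by
      rw [← hsqrt]; linarith [hlow, key]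
    rw [ha] at hkey
    have hli : L * L⁻¹ ^ 2 = L⁻¹ := by field_simp
    rw [hli] at hkey
    have hLi : 0 < L⁻¹ := by positivity
    linarith
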